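/- Let H be a complex Hilbert space and let 𝓡 be a selfadjoint subalgebra of B(H) (i.e. R ∈ 𝓡 implies R* ∈ 𝓡). If the closure of 𝓡 in the weak operator topology is a localizing algebra, then 𝓡 itself is a localizing algebra. -/

import Mathlib

open Filter Topology

/-- A linear subspace `𝒳 ⊆ B(H)` is *localizing* if there exists a closed ball `B ⊆ H`
with `0 ∉ B` such that for every sequence in `B` there are a subsequence and operators
`X_j ∈ 𝒳` with `‖X_j‖ ≤ 1` such that `X_j x_{n_j}` converges in norm to a nonzero vector. -/
def IsLocalizing {E : Type*} [NormedAddCommGroup E] [NormedSpace ℂ E]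
    (𝒳 : Set (E →L[ℂ] E)) : Prop :=
  ∃ (c : E) (r : ℝ) , 0 < r ∧ (0 : E) ∉ Metric.closedBall c r ∧
    ∀ x : ℕ → E, (∀ n, x n ∈ Metric.closedBall c r) →
      ∃ (n : ℕ → ℕ) (X : ℕ → E →L[ℂ] E) (y : E), StrictMono n ∧
        (∀ j, X j ∈ 𝒳) ∧ (∀ j, ‖X j‖ ≤ 1) ∧ y ≠ 0 ∧
        Tendsto (fun j => X j (x (n j))) atTop (𝓝 y)

/-- The closure of a set of operators in the weak operator topology. -/
def wotClosure (E : Type*) [NormedAddCommGroup E] [NormedSpace ℂ E]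
    (S : Set (E →L[ℂ] E)) : Set (E →L[ℂ] E) :=
  {T | (ContinuousLinearMapWOT.ofCLM T : E →WOT[ℂ] E) ∈
    closure ((ContinuousLinearMapWOT.ofCLM : (E →L[ℂ] E) → E →WOT[ℂ] E) '' S)}

/-- The linear equivalence from `E →L[ℂ] E` to `E →WOT[ℂ] E`. -/
noncomputable abbrev ContinuousLinearMap.toWOT (𝕜 : Type*) (E F : Type*) [NormedField 𝕜]
    [AddCommGroup E] [TopologicalSpace E] [Module 𝕜 E]
    [AddCommGroup F] [TopologicalSpace F] [Module 𝕜 F]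
    [IsTopologicalAddGroup F] [ContinuousConstSMul 𝕜 F] :
    (E →L[𝕜] F) ≃ₗ[𝕜] (E →WOT[𝕜] F) :=
  (ContinuousLinearMapWOT.linearEquiv 𝕜).symm

namespace LocalizingAux

open ContinuousLinearMap

/-! ### Generalities on the weak operator topology closure -/

section WOT

variable {E F : Type*} [NormedAddCommGroup E] [NormedSpace ℂ E]
  [NormedAddCommGroup F] [NormedSpace ℂ F]

lemma mem_wotClosure_iff {S : Set (E →L[ℂ] E)} {T : E →L[ℂ] E} :
    T ∈ wotClosure E S ↔ ContinuousLinearMap.toWOT ℂ E E T ∈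
      closure (ContinuousLinearMap.toWOT ℂ E E '' S) := Iff.rfl

lemma subset_wotClosure (S : Set (E →L[ℂ] E)) : S ⊆ wotClosure E S := fun M hM =>
  subset_closure ⟨M, hM, rfl⟩

lemma isClosed_wotClosure (S : Set (E →L[ℂ] E)) : IsClosed (wotClosure E S) := by
  have : wotClosure E S = (ContinuousLinearMap.toWOT ℂ E E) ⁻¹'
      (closure (ContinuousLinearMap.toWOT ℂ E E '' S)) := rfl
  rw [this]
  exact isClosed_closure.preimage ContinuousLinearMapWOT.ContinuousLinearMap.continuous_toWOT

lemma image_toWOT_wotClosure (S : Set (E →L[ℂ] E)) :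
    ContinuousLinearMap.toWOT ℂ E E '' (wotClosure E S)
      = closure (ContinuousLinearMap.toWOT ℂ E E '' S) := by
  have : wotClosure E S = (ContinuousLinearMap.toWOT ℂ E E) ⁻¹'
      (closure (ContinuousLinearMap.toWOT ℂ E E '' S)) := rfl
  rw [this, Set.image_preimage_eq _ (EquivLike.surjective _)]

lemma wotClosure_idem (S : Set (E →L[ℂ] E)) :
    wotClosure E (wotClosure E S) = wotClosure E S := by
  have h := image_toWOT_wotClosure (E := E) S
  ext T
  rw [mem_wotClosure_iff, h, closure_closure, ← mem_wotClosure_iff]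

/-- Transfer of membership in WOT closures along a WOT-continuous map. -/
lemma wot_map_mem (φ : (E →L[ℂ] E) → (F →L[ℂ] F))
    (hφ : Continuous fun A : E →WOT[ℂ] E =>
      ContinuousLinearMap.toWOT ℂ F F (φ ((ContinuousLinearMap.toWOT ℂ E E).symm A)))
    {S : Set (E →L[ℂ] E)} {S' : Set (F →L[ℂ] F)} (hS : ∀ M ∈ S, φ M ∈ S')
    {T : E →L[ℂ] E} (hT : T ∈ wotClosure E S) : φ T ∈ wotClosure F S' := by
  set g := fun A : E →WOT[ℂ] E =>
      ContinuousLinearMap.toWOT ℂ F F (φ ((ContinuousLinearMap.toWOT ℂ E E).symm A)) with hg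
  have h1 : g '' closure (ContinuousLinearMap.toWOT ℂ E E '' S) ⊆
      closure (g '' (ContinuousLinearMap.toWOT ℂ E E '' S)) :=
    image_closure_subset_closure_image hφ
  have h2 : g '' (ContinuousLinearMap.toWOT ℂ E E '' S) ⊆
      ContinuousLinearMap.toWOT ℂ F F '' S' := by
    rintro _ ⟨_, ⟨M, hM, rfl⟩, rfl⟩
    exact ⟨φ M, hS M hM, by simp [hg]⟩
  have : g (ContinuousLinearMap.toWOT ℂ E E T) ∈
      closure (ContinuousLinearMap.toWOT ℂ F F '' S') :=
    (closure_mono h2) (h1 ⟨_, hT, rfl⟩)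
  simpa [hg, mem_wotClosure_iff] using this

lemma wot_continuous_comp (C : E →L[ℂ] F) (D : F →L[ℂ] E) :
    Continuous fun A : E →WOT[ℂ] E =>
      ContinuousLinearMap.toWOT ℂ F F (C ∘L ((ContinuousLinearMap.toWOT ℂ E E).symm A) ∘L D) := by
  apply ContinuousLinearMapWOT.continuous_of_dual_apply_continuous
  intro x y
  exact ContinuousLinearMapWOT.continuous_dual_apply (D x) (y.comp C)

lemma wot_vanish {S : Set (E →L[ℂ] E)} (φ : (E →WOT[ℂ] E) → ℝ) (hφ : Continuous φ)
    (h0 : ∀ M ∈ S, φ (ContinuousLinearMap.toWOT ℂ E E M) = 0)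
    {T : E →L[ℂ] E} (hT : T ∈ wotClosure E S) : φ (ContinuousLinearMap.toWOT ℂ E E T) = 0 := by
  have h : closure (ContinuousLinearMap.toWOT ℂ E E '' S) ⊆ φ ⁻¹' {0} := by
    apply closure_minimal ?_ (isClosed_singleton.preimage hφ)
    rintro _ ⟨M, hM, rfl⟩
    exact h0 M hM
  exact h hT

lemma comp_mem_wotClosure (C : E →L[ℂ] F) (D : F →L[ℂ] E) {S : Set (E →L[ℂ] E)}
    {S' : Set (F →L[ℂ] F)}
    (hS : ∀ M ∈ S, C ∘L M ∘L D ∈ S') {T : E →L[ℂ] E} (hT : T ∈ wotClosure E S) :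
    C ∘L T ∘L D ∈ wotClosure F S' := by
  refine wot_map_mem (fun M => C ∘L M ∘L D) ?_ hS hT
  have := wot_continuous_comp (E := E) C D
  simpa using this

lemma add_mem_wotClosure {S : Set (E →L[ℂ] E)} (𝔄 : Submodule ℂ (E →L[ℂ] E))
    (hS : S = (𝔄 : Set (E →L[ℂ] E))) {a b : E →L[ℂ] E}
    (ha : a ∈ wotClosure E S) (hb : b ∈ wotClosure E S) : a + b ∈ wotClosure E S := by
  subst hS
  set N := (𝔄.map ((ContinuousLinearMap.toWOT ℂ E E).toLinearMap)).topologicalClosure with hN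
  have hcar : (N : Set (E →WOT[ℂ] E)) = closure (ContinuousLinearMap.toWOT ℂ E E '' 𝔄) := by
    rw [hN, Submodule.topologicalClosure_coe, Submodule.map_coe]
    rfl
  rw [mem_wotClosure_iff, ← hcar] at ha hb ⊢
  have : ContinuousLinearMap.toWOT ℂ E E (a + b)
      = ContinuousLinearMap.toWOT ℂ E E a + ContinuousLinearMap.toWOT ℂ E E b := map_add _ _ _
  rw [this]
  exact N.add_mem ha hb

/-- wotClosure of a subalgebra, as a subalgebra. -/
noncomputable def wotClosureSubalgebra (A : Subalgebra ℂ (E →L[ℂ] E)) :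
    Subalgebra ℂ (E →L[ℂ] E) where
  carrier := wotClosure E (A : Set (E →L[ℂ] E))
  mul_mem' := by
    intro a b ha hb
    have step1 : ∀ M ∈ (A : Set (E →L[ℂ] E)), ∀ t ∈ wotClosure E (A : Set (E →L[ℂ] E)),
        M ∘L t ∈ wotClosure E (A : Set (E →L[ℂ] E)) := by
      intro M hM t ht
      have : M ∘L t ∘L (1 : E →L[ℂ] E) ∈ wotClosure E (A : Set (E →L[ℂ] E)) := by
        refine comp_mem_wotClosure M 1 (fun M' hM' => ?_) ht
        simpa [ContinuousLinearMap.one_def, ContinuousLinearMap.mul_def, ContinuousLinearMap.comp_id] using A.mul_mem hM hM'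
      simpa [ContinuousLinearMap.one_def, ContinuousLinearMap.mul_def, ContinuousLinearMap.comp_id] using this
    have step2 : ∀ M ∈ (A : Set (E →L[ℂ] E)),
        (1 : E →L[ℂ] E) ∘L M ∘L b ∈ wotClosure E (A : Set (E →L[ℂ] E)) := by
      intro M hM
      simpa [ContinuousLinearMap.one_def, ContinuousLinearMap.mul_def, ContinuousLinearMap.id_comp] using step1 M hM b hb
    have : (1 : E →L[ℂ] E) ∘L a ∘L b ∈ wotClosure E (wotClosure E (A : Set (E →L[ℂ] E))) :=
      comp_mem_wotClosure 1 b step2 ha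
    rw [wotClosure_idem] at this
    simpa [ContinuousLinearMap.one_def, ContinuousLinearMap.mul_def, ContinuousLinearMap.id_comp] using this
  one_mem' := subset_wotClosure _ A.one_mem
  add_mem' := fun ha hb => add_mem_wotClosure A.toSubmodule rfl ha hb
  zero_mem' := subset_wotClosure _ A.zero_mem
  algebraMap_mem' := fun r => subset_wotClosure _ (A.algebraMap_mem r)

lemma coe_wotClosureSubalgebra (A : Subalgebra ℂ (E →L[ℂ] E)) :
    (wotClosureSubalgebra A : Set (E →L[ℂ] E)) = wotClosure E (A : Set (E →L[ℂ] E)) := rfl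

/-- Real polynomials of subalgebra members stay in the subalgebra. -/
lemma aeval_real_mem {B : Type*} [NormedRing B] [NormedAlgebra ℂ B]
    (A : Subalgebra ℂ B) {a : B} (ha : a ∈ A) (q : Polynomial ℝ) :
    Polynomial.aeval a q ∈ A := by
  have h1 : Polynomial.aeval a (q.map (algebraMap ℝ ℂ)) = Polynomial.aeval a q :=
    Polynomial.aeval_map_algebraMap ℂ a q
  rw [← h1]
  have h2 : Polynomial.aeval a (q.map (algebraMap ℝ ℂ)) ∈ Algebra.adjoin ℂ {a} := by
    rw [Algebra.adjoin_singleton_eq_range_aeval]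
    exact ⟨q.map (algebraMap ℝ ℂ), rfl⟩
  have h3 : Algebra.adjoin ℂ {a} ≤ A :=
    Algebra.adjoin_le (by simpa [Set.singleton_subset_iff] using ha)
  exact h3 h2

end WOT

section WOTHilbert

variable {E : Type*} [NormedAddCommGroup E] [InnerProductSpace ℂ E] [CompleteSpace E]

lemma wot_continuous_adjoint :
    Continuous fun A : E →WOT[ℂ] E =>
      ContinuousLinearMap.toWOT ℂ E E (adjoint ((ContinuousLinearMap.toWOT ℂ E E).symm A)) := by
  apply ContinuousLinearMapWOT.continuous_of_dual_apply_continuous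
  intro x y
  set z := (InnerProductSpace.toDual ℂ E).symm y with hz
  have hy : ∀ u, y u = (inner ℂ z u) := by
    intro u
    have : InnerProductSpace.toDual ℂ E z = y := by simp [hz]
    rw [← this]; rfl
  have heq : (fun A : E →WOT[ℂ] E => y ((ContinuousLinearMap.toWOT ℂ E E
      (adjoint ((ContinuousLinearMap.toWOT ℂ E E).symm A))) x))
      = fun A => starRingEnd ℂ ((innerSL ℂ x) (A z)) := by
    funext A
    rw [hy]
    have h1 : (ContinuousLinearMap.toWOT ℂ E E
        (adjoint ((ContinuousLinearMap.toWOT ℂ E E).symm A))) x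
        = adjoint ((ContinuousLinearMap.toWOT ℂ E E).symm A) x := rfl
    rw [h1, ContinuousLinearMap.adjoint_inner_right]
    rw [← inner_conj_symm]
    rfl
  rw [heq]
  exact continuous_star.comp (ContinuousLinearMapWOT.continuous_dual_apply z (innerSL ℂ x))

lemma adjoint_mem_wotClosure {S : Set (E →L[ℂ] E)}
    (hsa : ∀ M ∈ S, adjoint M ∈ S) {T : E →L[ℂ] E} (hT : T ∈ wotClosure E S) :
    adjoint T ∈ wotClosure E S :=
  wot_map_mem adjoint wot_continuous_adjoint hsa hT

end WOTHilbert

/-! ### A perpendicularity lemma in real Hilbert spaces -/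

lemma exists_perp_of_not_mem_closure {G : Type*} [NormedAddCommGroup G]
    [InnerProductSpace ℝ G] [CompleteSpace G] (K : Submodule ℝ G) (p : G)
    (hp : p ∉ closure (K : Set G)) :
    ∃ ζ : G, (∀ k ∈ K, (inner ℝ k ζ) = 0) ∧ (inner ℝ p ζ) ≠ 0 := by
  set K' := K.topologicalClosure with hK'
  haveI : CompleteSpace K' := K.isClosed_topologicalClosure.completeSpace_coe
  set ζ := p - (K'.orthogonalProjectionOnto p : G) with hζ
  have hζmem : ζ ∈ K'ᗮ := Submodule.sub_starProjection_mem_orthogonal (K := K') p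
  have hζne : ζ ≠ 0 := by
    intro h
    apply hp
    have : p = (K'.orthogonalProjectionOnto p : G) := by
      rwa [hζ, sub_eq_zero] at h
    rw [this]
    have h2 := (K'.orthogonalProjectionOnto p).2
    have h3 : (K' : Set G) = closure (K : Set G) := by
      rw [hK', Submodule.topologicalClosure_coe]
    rw [← h3]
    exact h2
  refine ⟨ζ, fun k hk => ?_, ?_⟩
  · exact (Submodule.mem_orthogonal K' ζ).mp hζmem k (Submodule.le_topologicalClosure K hk)
  · have h1 : (inner ℝ ((K'.orthogonalProjectionOnto p : G)) ζ) = 0 :=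
      (Submodule.mem_orthogonal K' ζ).mp hζmem _ (K'.orthogonalProjectionOnto p).2
    have h2 : p = (K'.orthogonalProjectionOnto p : G) + ζ := by rw [hζ]; abel
    rw [h2, inner_add_left, h1, zero_add]
    simpa [real_inner_self_eq_norm_sq] using pow_ne_zero 2 (norm_ne_zero_iff.mpr hζne)

/-! ### The doubled Hilbert space -/

section Double

variable (H : Type*) [NormedAddCommGroup H] [InnerProductSpace ℂ H] [CompleteSpace H]

noncomputable def P1 : WithLp 2 (H × H) →L[ℂ] H :=
  (ContinuousLinearMap.fst ℂ H H).comp (WithLp.prodContinuousLinearEquiv 2 ℂ H H).toContinuousLinearMap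
noncomputable def P2 : WithLp 2 (H × H) →L[ℂ] H :=
  (ContinuousLinearMap.snd ℂ H H).comp (WithLp.prodContinuousLinearEquiv 2 ℂ H H).toContinuousLinearMap
noncomputable def J1 : H →L[ℂ] WithLp 2 (H × H) :=
  ((WithLp.prodContinuousLinearEquiv 2 ℂ H H).symm.toContinuousLinearMap).comp (ContinuousLinearMap.inl ℂ H H)
noncomputable def J2 : H →L[ℂ] WithLp 2 (H × H) :=
  ((WithLp.prodContinuousLinearEquiv 2 ℂ H H).symm.toContinuousLinearMap).comp (ContinuousLinearMap.inr ℂ H H)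

variable {H}

@[simp] lemma P1_J1_apply (x : H) : P1 H (J1 H x) = x := by simp [P1, J1]
@[simp] lemma P2_J2_apply (x : H) : P2 H (J2 H x) = x := by simp [P2, J2]
@[simp] lemma P1_J2_apply (x : H) : P1 H (J2 H x) = 0 := by simp [P1, J2]
@[simp] lemma P2_J1_apply (x : H) : P2 H (J1 H x) = 0 := by simp [P2, J1]

lemma JP_sum_apply (v : WithLp 2 (H × H)) : J1 H (P1 H v) + J2 H (P2 H v) = v := by
  apply (WithLp.prodContinuousLinearEquiv 2 ℂ H H).injective
  simp [P1, P2, J1, J2]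
  rfl

lemma adjoint_J1 : ContinuousLinearMap.adjoint (J1 H) = P1 H := by
  symm; rw [ContinuousLinearMap.eq_adjoint_iff]
  intro x y
  simp only [P1, J1, ContinuousLinearMap.coe_comp', Function.comp_apply]
  rw [WithLp.prod_inner_apply]
  simp

lemma adjoint_J2 : ContinuousLinearMap.adjoint (J2 H) = P2 H := by
  symm; rw [ContinuousLinearMap.eq_adjoint_iff]
  intro x y
  simp only [P2, J2, ContinuousLinearMap.coe_comp', Function.comp_apply]
  rw [WithLp.prod_inner_apply]
  simp

lemma adjoint_P1 : ContinuousLinearMap.adjoint (P1 H) = J1 H := by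
  rw [← adjoint_J1, ContinuousLinearMap.adjoint_adjoint]
lemma adjoint_P2 : ContinuousLinearMap.adjoint (P2 H) = J2 H := by
  rw [← adjoint_J2, ContinuousLinearMap.adjoint_adjoint]

lemma norm_sq_decomp (v : WithLp 2 (H × H)) : ‖v‖ ^ 2 = ‖P1 H v‖ ^ 2 + ‖P2 H v‖ ^ 2 := by
  rw [WithLp.prod_norm_sq_eq_of_L2]; rfl

lemma norm_P1_le (v : WithLp 2 (H × H)) : ‖P1 H v‖ ≤ ‖v‖ := by
  have h := norm_sq_decomp v
  nlinarith [norm_nonneg (P1 H v), norm_nonneg (P2 H v), norm_nonneg v]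

lemma norm_P2_le (v : WithLp 2 (H × H)) : ‖P2 H v‖ ≤ ‖v‖ := by
  have h := norm_sq_decomp v
  nlinarith [norm_nonneg (P1 H v), norm_nonneg (P2 H v), norm_nonneg v]

lemma norm_J1_apply (x : H) : ‖J1 H x‖ = ‖x‖ := by
  have h := norm_sq_decomp (J1 H x)
  simp only [P1_J1_apply, P2_J1_apply, norm_zero] at h
  nlinarith [norm_nonneg (J1 H x), norm_nonneg x]

lemma norm_J2_apply (x : H) : ‖J2 H x‖ = ‖x‖ := by
  have h := norm_sq_decomp (J2 H x)
  simp only [P1_J2_apply, P2_J2_apply, norm_zero] at h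
  nlinarith [norm_nonneg (J2 H x), norm_nonneg x]

/-- The algebra of `2×2` matrices with entries in `𝓡`, acting on `H ⊕ H`. -/
noncomputable def A2 (𝓡 : Subalgebra ℂ (H →L[ℂ] H)) :
    Subalgebra ℂ (WithLp 2 (H × H) →L[ℂ] WithLp 2 (H × H)) where
  carrier := {M | P1 H ∘L M ∘L J1 H ∈ 𝓡 ∧ P1 H ∘L M ∘L J2 H ∈ 𝓡 ∧
      P2 H ∘L M ∘L J1 H ∈ 𝓡 ∧ P2 H ∘L M ∘L J2 H ∈ 𝓡}
  mul_mem' := by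
    intro a b ha hb
    have hdecomp : ∀ (P : WithLp 2 (H × H) →L[ℂ] H) (J : H →L[ℂ] WithLp 2 (H × H)),
        P ∘L (a * b) ∘L J = (P ∘L a ∘L J1 H) ∘L (P1 H ∘L b ∘L J)
          + (P ∘L a ∘L J2 H) ∘L (P2 H ∘L b ∘L J) := by
      intro P J
      ext x
      simp only [ContinuousLinearMap.coe_comp', Function.comp_apply,
        ContinuousLinearMap.mul_apply, ContinuousLinearMap.add_apply]
      rw [← map_add, ← map_add, JP_sum_apply]
    obtain ⟨ha11, ha12, ha21, ha22⟩ := ha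
    obtain ⟨hb11, hb12, hb21, hb22⟩ := hb
    refine ⟨?_, ?_, ?_, ?_⟩ <;> rw [hdecomp]
    · exact 𝓡.add_mem (𝓡.mul_mem ha11 hb11) (𝓡.mul_mem ha12 hb21)
    · exact 𝓡.add_mem (𝓡.mul_mem ha11 hb12) (𝓡.mul_mem ha12 hb22)
    · exact 𝓡.add_mem (𝓡.mul_mem ha21 hb11) (𝓡.mul_mem ha22 hb21)
    · exact 𝓡.add_mem (𝓡.mul_mem ha21 hb12) (𝓡.mul_mem ha22 hb22)
  one_mem' := by
    refine ⟨?_, ?_, ?_, ?_⟩ <;>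
      [ (have : P1 H ∘L (1 : WithLp 2 (H × H) →L[ℂ] WithLp 2 (H × H)) ∘L J1 H = 1 := by ext x; simp);
        (have : P1 H ∘L (1 : WithLp 2 (H × H) →L[ℂ] WithLp 2 (H × H)) ∘L J2 H = 0 := by ext x; simp);
        (have : P2 H ∘L (1 : WithLp 2 (H × H) →L[ℂ] WithLp 2 (H × H)) ∘L J1 H = 0 := by ext x; simp);
        (have : P2 H ∘L (1 : WithLp 2 (H × H) →L[ℂ] WithLp 2 (H × H)) ∘L J2 H = 1 := by ext x; simp)] <;>
      rw [this] <;> first | exact 𝓡.one_mem | exact 𝓡.zero_mem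
  add_mem' := by
    intro a b ha hb
    obtain ⟨ha11, ha12, ha21, ha22⟩ := ha
    obtain ⟨hb11, hb12, hb21, hb22⟩ := hb
    have h : ∀ (P : WithLp 2 (H × H) →L[ℂ] H) (J : H →L[ℂ] WithLp 2 (H × H)),
        P ∘L (a + b) ∘L J = P ∘L a ∘L J + P ∘L b ∘L J := by
      intro P J; ext x; simp
    refine ⟨?_, ?_, ?_, ?_⟩ <;> rw [h] <;> exact 𝓡.add_mem (by assumption) (by assumption)
  zero_mem' := by
    have h : ∀ (P : WithLp 2 (H × H) →L[ℂ] H) (J : H →L[ℂ] WithLp 2 (H × H)),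
        P ∘L (0 : WithLp 2 (H × H) →L[ℂ] WithLp 2 (H × H)) ∘L J = 0 := by
      intro P J; ext x; simp
    exact ⟨by rw [h]; exact 𝓡.zero_mem, by rw [h]; exact 𝓡.zero_mem,
      by rw [h]; exact 𝓡.zero_mem, by rw [h]; exact 𝓡.zero_mem⟩
  algebraMap_mem' := by
    intro r
    have h : ∀ (P : WithLp 2 (H × H) →L[ℂ] H) (J : H →L[ℂ] WithLp 2 (H × H)),
        P ∘L (algebraMap ℂ (WithLp 2 (H × H) →L[ℂ] WithLp 2 (H × H)) r) ∘L J
          = r • (P ∘L J) := by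
      intro P J; ext x
      simp [Algebra.algebraMap_eq_smul_one]
    refine ⟨?_, ?_, ?_, ?_⟩ <;> rw [h]
    · have : P1 H ∘L J1 H = 1 := by ext x; simp
      rw [this]; exact 𝓡.smul_mem 𝓡.one_mem r
    · have : P1 H ∘L J2 H = 0 := by ext x; simp
      rw [this]; simpa using 𝓡.smul_mem 𝓡.zero_mem r
    · have : P2 H ∘L J1 H = 0 := by ext x; simp
      rw [this]; simpa using 𝓡.smul_mem 𝓡.zero_mem r
    · have : P2 H ∘L J2 H = 1 := by ext x; simp
      rw [this]; exact 𝓡.smul_mem 𝓡.one_mem r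

lemma mem_A2_iff {𝓡 : Subalgebra ℂ (H →L[ℂ] H)}
    {M : WithLp 2 (H × H) →L[ℂ] WithLp 2 (H × H)} :
    M ∈ A2 𝓡 ↔ P1 H ∘L M ∘L J1 H ∈ 𝓡 ∧ P1 H ∘L M ∘L J2 H ∈ 𝓡 ∧
      P2 H ∘L M ∘L J1 H ∈ 𝓡 ∧ P2 H ∘L M ∘L J2 H ∈ 𝓡 := Iff.rfl

lemma adjoint_mem_A2 {𝓡 : Subalgebra ℂ (H →L[ℂ] H)}
    (hsa : ∀ R ∈ 𝓡, ContinuousLinearMap.adjoint R ∈ 𝓡)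
    {M : WithLp 2 (H × H) →L[ℂ] WithLp 2 (H × H)} (hM : M ∈ A2 𝓡) :
    ContinuousLinearMap.adjoint M ∈ A2 𝓡 := by
  obtain ⟨h11, h12, h21, h22⟩ := hM
  have e : ∀ (P : WithLp 2 (H × H) →L[ℂ] H) (J : H →L[ℂ] WithLp 2 (H × H)),
      ContinuousLinearMap.adjoint (P ∘L M ∘L J)
        = (ContinuousLinearMap.adjoint J) ∘L (ContinuousLinearMap.adjoint M)
          ∘L (ContinuousLinearMap.adjoint P) := by
    intro P J
    rw [ContinuousLinearMap.adjoint_comp, ContinuousLinearMap.adjoint_comp]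
    rfl
  refine ⟨?_, ?_, ?_, ?_⟩
  · have := hsa _ h11
    rwa [e, adjoint_J1, adjoint_P1] at this
  · have := hsa _ h21
    rwa [e, adjoint_J1, adjoint_P2] at this
  · have := hsa _ h12
    rwa [e, adjoint_J2, adjoint_P1] at this
  · have := hsa _ h22
    rwa [e, adjoint_J2, adjoint_P2] at this

variable (H) in
/-- The selfadjoint "off-diagonal" doubling of an operator. -/
noncomputable def Ttil (T : H →L[ℂ] H) :
    WithLp 2 (H × H) →L[ℂ] WithLp 2 (H × H) :=
  J1 H ∘L T ∘L P2 H + J2 H ∘L (ContinuousLinearMap.adjoint T) ∘L P1 H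

lemma isSelfAdjoint_Ttil (T : H →L[ℂ] H) : IsSelfAdjoint (Ttil H T) := by
  rw [ContinuousLinearMap.isSelfAdjoint_iff']
  unfold Ttil
  rw [map_add]
  have e : ∀ (J : H →L[ℂ] WithLp 2 (H × H)) (S : H →L[ℂ] H) (P : WithLp 2 (H × H) →L[ℂ] H),
      ContinuousLinearMap.adjoint (J ∘L S ∘L P)
        = (ContinuousLinearMap.adjoint P) ∘L (ContinuousLinearMap.adjoint S)
          ∘L (ContinuousLinearMap.adjoint J) := by
    intro J S P
    rw [ContinuousLinearMap.adjoint_comp, ContinuousLinearMap.adjoint_comp]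
    rfl
  rw [e, e, adjoint_P2, adjoint_J1, adjoint_P1, adjoint_J2,
    ContinuousLinearMap.adjoint_adjoint, add_comm]

lemma Ttil_apply_J2 (T : H →L[ℂ] H) (x : H) : Ttil H T (J2 H x) = J1 H (T x) := by
  unfold Ttil
  simp

lemma norm_Ttil_le (T : H →L[ℂ] H) (hT : ‖T‖ ≤ 1) : ‖Ttil H T‖ ≤ 1 := by
  refine ContinuousLinearMap.opNorm_le_bound _ zero_le_one (fun v => ?_)
  rw [one_mul]
  have hv : Ttil H T v = J1 H (T (P2 H v)) + J2 H (ContinuousLinearMap.adjoint T (P1 H v)) := by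
    unfold Ttil; simp
  have h1 : ‖T (P2 H v)‖ ≤ ‖P2 H v‖ :=
    le_trans (T.le_opNorm _) (mul_le_of_le_one_left (norm_nonneg _) hT)
  have hadj : ‖ContinuousLinearMap.adjoint T‖ ≤ 1 := by
    rw [show ‖ContinuousLinearMap.adjoint T‖ = ‖T‖ from
      LinearIsometryEquiv.norm_map ContinuousLinearMap.adjoint T]
    exact hT
  have h2 : ‖ContinuousLinearMap.adjoint T (P1 H v)‖ ≤ ‖P1 H v‖ :=
    le_trans ((ContinuousLinearMap.adjoint T).le_opNorm _)
      (mul_le_of_le_one_left (norm_nonneg _) hadj)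
  have hP1 : P1 H (Ttil H T v) = T (P2 H v) := by rw [hv]; simp
  have hP2 : P2 H (Ttil H T v) = ContinuousLinearMap.adjoint T (P1 H v) := by rw [hv]; simp
  have hn := norm_sq_decomp (Ttil H T v)
  rw [hP1, hP2] at hn
  have hn2 := norm_sq_decomp v
  nlinarith [norm_nonneg (Ttil H T v), norm_nonneg v, norm_nonneg (P1 H v), norm_nonneg (P2 H v),
    norm_nonneg (T (P2 H v)), norm_nonneg (ContinuousLinearMap.adjoint T (P1 H v))]

end Double

/-! ### Scalar functions for the Kaplansky density trick -/

noncomputable def wfun : ℝ → ℝ := fun t => (1 + t * t)⁻¹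
noncomputable def mfun : ℝ → ℝ := fun t => t * wfun t
noncomputable def ffun : ℝ → ℝ := fun t => mfun t + mfun t
noncomputable def gfun : ℝ → ℝ := fun t => t / (1 + Real.sqrt (1 - t * t))

lemma one_add_sq_pos (t : ℝ) : (0:ℝ) < 1 + t * t := by nlinarith [sq_nonneg t]

lemma continuous_wfun : Continuous wfun := by
  apply Continuous.inv₀ (by continuity)
  intro x; exact ne_of_gt (one_add_sq_pos x)

lemma continuous_mfun : Continuous mfun := continuous_id.mul continuous_wfun

lemma continuous_ffun : Continuous ffun := continuous_mfun.add continuous_mfun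

lemma continuous_gfun : Continuous gfun := by
  apply Continuous.div continuous_id
  · exact continuous_const.add (Real.continuous_sqrt.comp (by continuity))
  · intro x
    have := Real.sqrt_nonneg (1 - x * x)
    intro h; linarith [h]

lemma abs_wfun_le (t : ℝ) : ‖wfun t‖ ≤ 1 := by
  unfold wfun
  rw [Real.norm_eq_abs, abs_of_pos (inv_pos.mpr (one_add_sq_pos t))]
  rw [inv_le_one_iff₀]
  right; nlinarith [sq_nonneg t]

lemma abs_mfun_le (t : ℝ) : ‖mfun t‖ ≤ 2⁻¹ := by
  unfold mfun wfun
  rw [Real.norm_eq_abs, abs_mul, abs_inv, abs_of_pos (one_add_sq_pos t)]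
  rw [mul_inv_le_iff₀ (one_add_sq_pos t)]
  nlinarith [sq_nonneg (|t| - 1), abs_nonneg t, sq_abs t]

lemma ffun_gfun {t : ℝ} (ht : t * t ≤ 1) : ffun (gfun t) = t := by
  have hr0 : 0 ≤ Real.sqrt (1 - t * t) := Real.sqrt_nonneg _
  set r := Real.sqrt (1 - t * t) with hrdef
  have hr2 : r * r = 1 - t * t := Real.mul_self_sqrt (by linarith)
  have hden : (0:ℝ) < 1 + r := by linarith
  have hg : gfun t = t / (1 + r) := rfl
  have hkey : 1 + (gfun t) * (gfun t) = 2 / (1 + r) := by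
    rw [hg]
    field_simp
    linear_combination hr2
  show mfun (gfun t) + mfun (gfun t) = t
  unfold mfun wfun
  rw [hkey, hg]
  have hne : (1 + r) ≠ 0 := ne_of_gt hden
  field_simp
  ring

lemma ring_identity {B : Type*} [Ring B] (a s u v : B)
    (hu : u * (1 + a * a) = 1) (hv : (1 + s * s) * v = 1) :
    u * a - s * v = u * ((a - s) * v) + (u * a) * ((s - a) * (s * v)) := by
  have h1 : u * ((a - s) * v) + (u * a) * ((s - a) * (s * v))
      = u * ((a * (1 + s * s) - (1 + a * a) * s) * v) := by noncomm_ring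
  have h2 : u * ((a * (1 + s * s) - (1 + a * a) * s) * v)
      = u * a * ((1 + s * s) * v) - (u * (1 + a * a)) * (s * v) := by noncomm_ring
  rw [h1, h2, hu, hv, mul_one, one_mul]

section CFC

variable {E : Type*} [NormedAddCommGroup E] [InnerProductSpace ℂ E] [CompleteSpace E]
  [Nontrivial E]

lemma one_add_mul_self_eq (a : E →L[ℂ] E) (ha : IsSelfAdjoint a) :
    cfc (fun t : ℝ => 1 + t * t) a = 1 + a * a := by
  set q : Polynomial ℝ := Polynomial.X * Polynomial.X + 1 with hq
  have h2 : cfc q.eval a = Polynomial.aeval a q := cfc_polynomial q a ha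
  have h3 : Polynomial.aeval a q = a * a + 1 := by simp [hq]
  have h4 : cfc (fun t : ℝ => 1 + t * t) a = cfc q.eval a := by
    apply cfc_congr
    intro x _
    simp [hq]; ring
  rw [h4, h2, h3, add_comm]

lemma cfc_w_mul (a : E →L[ℂ] E) (ha : IsSelfAdjoint a) :
    cfc wfun a * (1 + a * a) = 1 := by
  rw [← one_add_mul_self_eq a ha,
    ← cfc_mul wfun (fun t : ℝ => 1 + t * t) a continuous_wfun.continuousOn (by fun_prop)]
  have : cfc (fun t : ℝ => wfun t * (1 + t * t)) a = cfc (1 : ℝ → ℝ) a := by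
    apply cfc_congr
    intro x _
    simp only [Pi.one_apply]
    exact inv_mul_cancel₀ (ne_of_gt (one_add_sq_pos x))
  rw [this, cfc_one ℝ a]

lemma mul_cfc_w (a : E →L[ℂ] E) (ha : IsSelfAdjoint a) :
    (1 + a * a) * cfc wfun a = 1 := by
  rw [← one_add_mul_self_eq a ha,
    ← cfc_mul (fun t : ℝ => 1 + t * t) wfun a (by fun_prop) continuous_wfun.continuousOn]
  have : cfc (fun t : ℝ => (1 + t * t) * wfun t) a = cfc (1 : ℝ → ℝ) a := by
    apply cfc_congr
    intro x _
    simp only [Pi.one_apply]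
    exact mul_inv_cancel₀ (ne_of_gt (one_add_sq_pos x))
  rw [this, cfc_one ℝ a]

lemma norm_cfc_w_le (a : E →L[ℂ] E) : ‖cfc wfun a‖ ≤ 1 :=
  norm_cfc_le zero_le_one (fun x _ => abs_wfun_le x)

lemma norm_cfc_m_le (a : E →L[ℂ] E) : ‖cfc mfun a‖ ≤ 2⁻¹ :=
  norm_cfc_le (by norm_num) (fun x _ => abs_mfun_le x)

lemma cfc_m_eq (a : E →L[ℂ] E) (ha : IsSelfAdjoint a) :
    cfc mfun a = a * cfc wfun a := by
  have h := cfc_mul (fun t : ℝ => t) wfun a continuous_id.continuousOn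
    continuous_wfun.continuousOn
  rw [cfc_id' ℝ a] at h
  exact h

lemma cfc_m_eq' (a : E →L[ℂ] E) (ha : IsSelfAdjoint a) :
    cfc mfun a = cfc wfun a * a := by
  have h := cfc_mul wfun (fun t : ℝ => t) a continuous_wfun.continuousOn
    continuous_id.continuousOn
  rw [cfc_id' ℝ a] at h
  rw [← h]
  apply cfc_congr
  intro t _
  unfold mfun
  exact mul_comm _ _

lemma cfc_f_eq (a : E →L[ℂ] E) (ha : IsSelfAdjoint a) :
    cfc ffun a = cfc mfun a + cfc mfun a :=
  cfc_add a mfun mfun continuous_mfun.continuousOn continuous_mfun.continuousOn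

lemma spectrum_subset_Icc (a : E →L[ℂ] E) :
    spectrum ℝ a ⊆ Set.Icc (-‖a‖) ‖a‖ := by
  intro x hx
  have := spectrum.subset_closedBall_norm (𝕜 := ℝ) a hx
  rw [Metric.mem_closedBall, Real.dist_eq, sub_zero] at this
  exact abs_le.mp this

lemma cfc_mem_closure (A : Subalgebra ℂ (E →L[ℂ] E)) {a : E →L[ℂ] E}
    (haA : a ∈ A) (ha : IsSelfAdjoint a) (f : ℝ → ℝ) (hf : Continuous f) :
    cfc f a ∈ closure (A : Set (E →L[ℂ] E)) := by
  rw [Metric.mem_closure_iff]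
  intro ε hε
  obtain ⟨q, hq⟩ := exists_polynomial_near_of_continuousOn (-‖a‖) ‖a‖ f
    hf.continuousOn (ε/2) (by positivity)
  refine ⟨Polynomial.aeval a q, aeval_real_mem A haA q, ?_⟩
  rw [dist_eq_norm, ← cfc_polynomial q a ha]
  rw [← cfc_sub f q.eval a hf.continuousOn (by fun_prop)]
  have hb : ‖cfc (fun x => f x - q.eval x) a‖ ≤ ε/2 := by
    apply norm_cfc_le (by positivity)
    intro x hx
    have hx2 := spectrum_subset_Icc a hx
    have := hq x hx2
    rw [Real.norm_eq_abs, abs_sub_comm]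
    exact le_of_lt this
  linarith

end CFC

/-! ### Membership of the doubled operator and selfadjoint approximation -/

section Approx

variable {H : Type*} [NormedAddCommGroup H] [InnerProductSpace ℂ H] [CompleteSpace H]

lemma Ttil_mem_wotClosure {𝓡 : Subalgebra ℂ (H →L[ℂ] H)}
    (hsa : ∀ R ∈ 𝓡, ContinuousLinearMap.adjoint R ∈ 𝓡)
    {T : H →L[ℂ] H} (hT : T ∈ wotClosure H (𝓡 : Set (H →L[ℂ] H))) :
    Ttil H T ∈ wotClosure (WithLp 2 (H × H)) ((A2 𝓡 : Set _)) := by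
  have h1 : J1 H ∘L T ∘L P2 H ∈ wotClosure (WithLp 2 (H × H)) ((A2 𝓡 : Set _)) := by
    refine comp_mem_wotClosure (J1 H) (P2 H) (fun M hM => ?_) hT
    refine ⟨?_, ?_, ?_, ?_⟩
    · have e : P1 H ∘L (J1 H ∘L M ∘L P2 H) ∘L J1 H = 0 := by ext z; simp
      rw [e]; exact 𝓡.zero_mem
    · have e : P1 H ∘L (J1 H ∘L M ∘L P2 H) ∘L J2 H = M := by ext z; simp
      rw [e]; exact hM
    · have e : P2 H ∘L (J1 H ∘L M ∘L P2 H) ∘L J1 H = 0 := by ext z; simp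
      rw [e]; exact 𝓡.zero_mem
    · have e : P2 H ∘L (J1 H ∘L M ∘L P2 H) ∘L J2 H = 0 := by ext z; simp
      rw [e]; exact 𝓡.zero_mem
  have hTs : ContinuousLinearMap.adjoint T ∈ wotClosure H (𝓡 : Set (H →L[ℂ] H)) :=
    adjoint_mem_wotClosure hsa hT
  have h2 : J2 H ∘L (ContinuousLinearMap.adjoint T) ∘L P1 H
      ∈ wotClosure (WithLp 2 (H × H)) ((A2 𝓡 : Set _)) := by
    refine comp_mem_wotClosure (J2 H) (P1 H) (fun M hM => ?_) hTs
    refine ⟨?_, ?_, ?_, ?_⟩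
    · have e : P1 H ∘L (J2 H ∘L M ∘L P1 H) ∘L J1 H = 0 := by ext z; simp
      rw [e]; exact 𝓡.zero_mem
    · have e : P1 H ∘L (J2 H ∘L M ∘L P1 H) ∘L J2 H = 0 := by ext z; simp
      rw [e]; exact 𝓡.zero_mem
    · have e : P2 H ∘L (J2 H ∘L M ∘L P1 H) ∘L J1 H = M := by ext z; simp
      rw [e]; exact hM
    · have e : P2 H ∘L (J2 H ∘L M ∘L P1 H) ∘L J2 H = 0 := by ext z; simp
      rw [e]; exact 𝓡.zero_mem
  exact add_mem_wotClosure (A2 𝓡).toSubmodule rfl h1 h2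

variable {E : Type*} [NormedAddCommGroup E] [InnerProductSpace ℂ E] [CompleteSpace E]

/-- A selfadjoint element of the WOT-closure of a selfadjoint subalgebra is in the
WOT-closure of its selfadjoint part. -/
lemma mem_wotClosure_sa_part (A : Subalgebra ℂ (E →L[ℂ] E))
    (hsaA : ∀ M ∈ A, ContinuousLinearMap.adjoint M ∈ A)
    {S : E →L[ℂ] E} (hS : S ∈ wotClosure E (A : Set _)) (hSsa : IsSelfAdjoint S) :
    S ∈ wotClosure E {M : E →L[ℂ] E | M ∈ A ∧ IsSelfAdjoint M} := by
  set φ : (E →L[ℂ] E) → (E →L[ℂ] E) :=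
    fun M => (2⁻¹ : ℂ) • (M + ContinuousLinearMap.adjoint M) with hφ
  have hcont : Continuous fun A' : E →WOT[ℂ] E =>
      ContinuousLinearMap.toWOT ℂ E E (φ ((ContinuousLinearMap.toWOT ℂ E E).symm A')) := by
    have heq : (fun A' : E →WOT[ℂ] E =>
        ContinuousLinearMap.toWOT ℂ E E (φ ((ContinuousLinearMap.toWOT ℂ E E).symm A')))
        = fun A' : E →WOT[ℂ] E => (2⁻¹ : ℂ) • (A' + ContinuousLinearMap.toWOT ℂ E E
            (ContinuousLinearMap.adjoint ((ContinuousLinearMap.toWOT ℂ E E).symm A'))) := by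
      funext A'
      simp only [hφ, map_smul, map_add, LinearEquiv.apply_symm_apply]
    rw [heq]
    have h1 : Continuous fun A' : E →WOT[ℂ] E => A' + ContinuousLinearMap.toWOT ℂ E E
        (ContinuousLinearMap.adjoint ((ContinuousLinearMap.toWOT ℂ E E).symm A')) := by
      apply Continuous.add
      · exact continuous_id
      · exact wot_continuous_adjoint
    exact h1.const_smul (2⁻¹ : ℂ)
  have hmaps : ∀ M ∈ (A : Set (E →L[ℂ] E)), φ M ∈ {M : E →L[ℂ] E | M ∈ A ∧ IsSelfAdjoint M} := by
    intro M hM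
    constructor
    · exact A.smul_mem (A.add_mem hM (hsaA M hM)) _
    · rw [IsSelfAdjoint]
      rw [star_smul, star_add]
      rw [ContinuousLinearMap.star_eq_adjoint, ContinuousLinearMap.star_eq_adjoint,
        ContinuousLinearMap.adjoint_adjoint]
      rw [add_comm]
      congr 1
      simp
  have := wot_map_mem φ hcont hmaps hS
  have hφS : φ S = S := by
    rw [hφ]
    simp only []
    rw [ContinuousLinearMap.isSelfAdjoint_iff'.mp hSsa, ← two_smul ℂ S, smul_smul]
    norm_num
  rwa [hφS] at this

/-- evaluation at a vector, as a real-linear map -/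
noncomputable def evalR (w : E) : (E →L[ℂ] E) →ₗ[ℝ] E where
  toFun := fun M => M w
  map_add' := fun M N => by simp
  map_smul' := fun r M => by simp

lemma exists_approx_two (Vsub : Submodule ℝ (E →L[ℂ] E)) {S : E →L[ℂ] E}
    (hS : S ∈ wotClosure E (Vsub : Set _)) (w₁ w₂ : E) {δ : ℝ} (hδ : 0 < δ) :
    ∃ M ∈ Vsub, ‖M w₁ - S w₁‖ ≤ δ ∧ ‖M w₂ - S w₂‖ ≤ δ := by
  by_contra hcon
  push_neg at hcon
  letI : InnerProductSpace ℝ (WithLp 2 (E × E)) := InnerProductSpace.complexToReal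
  set ψ : (E →L[ℂ] E) →ₗ[ℝ] WithLp 2 (E × E) :=
    ((WithLp.linearEquiv 2 ℝ (E × E)).symm.toLinearMap).comp
      ((evalR (E := E) w₁).prod (evalR (E := E) w₂)) with hψ
  have hψ_fst : ∀ M, (ψ M).fst = M w₁ := fun M => rfl
  have hψ_snd : ∀ M, (ψ M).snd = M w₂ := fun M => rfl
  set K := Vsub.map ψ with hK
  set p := ψ S with hp
  have hnotin : p ∉ closure (K : Set (WithLp 2 (E × E))) := by
    intro hmem
    rw [Metric.mem_closure_iff] at hmem
    obtain ⟨q, hqK, hqd⟩ := hmem δ hδ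
    obtain ⟨M, hMV, rfl⟩ := hqK
    have hdist : ‖ψ M - p‖ < δ := by
      rw [dist_eq_norm] at hqd
      rw [norm_sub_rev]
      exact hqd
    have hfst : ‖M w₁ - S w₁‖ ≤ ‖ψ M - p‖ := by
      have h := WithLp.prod_norm_sq_eq_of_L2 (ψ M - p)
      have h1 : (ψ M - p).fst = M w₁ - S w₁ := rfl
      have h2 : (ψ M - p).snd = M w₂ - S w₂ := rfl
      rw [h1, h2] at h
      nlinarith [norm_nonneg (ψ M - p), norm_nonneg (M w₁ - S w₁), norm_nonneg (M w₂ - S w₂)]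
    have hsnd : ‖M w₂ - S w₂‖ ≤ ‖ψ M - p‖ := by
      have h := WithLp.prod_norm_sq_eq_of_L2 (ψ M - p)
      have h1 : (ψ M - p).fst = M w₁ - S w₁ := rfl
      have h2 : (ψ M - p).snd = M w₂ - S w₂ := rfl
      rw [h1, h2] at h
      nlinarith [norm_nonneg (ψ M - p), norm_nonneg (M w₁ - S w₁), norm_nonneg (M w₂ - S w₂)]
    exact absurd (hcon M hMV (le_trans hfst hdist.le)) (not_lt.mpr (le_trans hsnd hdist.le))
  obtain ⟨ζ, hζK, hζp⟩ := exists_perp_of_not_mem_closure K p hnotin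
  set φ : (E →WOT[ℂ] E) → ℝ := fun A =>
    Complex.re ((innerSL ℂ ζ.fst) (A w₁)) + Complex.re ((innerSL ℂ ζ.snd) (A w₂)) with hφ
  have hφcont : Continuous φ := by
    apply Continuous.add
    · exact Complex.continuous_re.comp (ContinuousLinearMapWOT.continuous_dual_apply w₁ _)
    · exact Complex.continuous_re.comp (ContinuousLinearMapWOT.continuous_dual_apply w₂ _)
  have hφeval : ∀ M : E →L[ℂ] E, φ (ContinuousLinearMap.toWOT ℂ E E M)
      = (inner ℝ (ψ M) ζ) := by
    intro M
    have h1 : (inner ℝ (ψ M) ζ) = Complex.re (inner ℂ (ψ M) ζ) := rfl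
    rw [h1, WithLp.prod_inner_apply]
    rw [hφ]
    simp only [innerSL_apply_apply, map_add]
    have e1 : (ContinuousLinearMap.toWOT ℂ E E M) w₁ = M w₁ := rfl
    have e2 : (ContinuousLinearMap.toWOT ℂ E E M) w₂ = M w₂ := rfl
    rw [e1, e2]
    show (inner ℂ ζ.fst (M w₁)).re + (inner ℂ ζ.snd (M w₂)).re
      = (inner ℂ (M w₁) ζ.fst + inner ℂ (M w₂) ζ.snd).re
    have hre : ∀ u v : E, (inner ℂ u v).re = (inner ℂ v u).re := by
      intro u v
      have := inner_re_symm (𝕜 := ℂ) u v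
      simpa using this
    rw [Complex.add_re, hre ζ.fst (M w₁), hre ζ.snd (M w₂)]
  have h0 : ∀ M ∈ (Vsub : Set (E →L[ℂ] E)), φ (ContinuousLinearMap.toWOT ℂ E E M) = 0 := by
    intro M hM
    rw [hφeval]
    exact hζK (ψ M) (Submodule.mem_map_of_mem hM)
  have := wot_vanish φ hφcont h0 hS
  rw [hφeval S] at this
  exact hζp this

end Approx

/-! ### The key density lemma -/

section Key

variable {H : Type*} [NormedAddCommGroup H] [InnerProductSpace ℂ H] [CompleteSpace H]
  [Nontrivial H]

set_option maxHeartbeats 2000000 in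
set_option synthInstance.maxHeartbeats 400000 in
lemma key (𝓡 : Subalgebra ℂ (H →L[ℂ] H))
    (hsa : ∀ R ∈ 𝓡, ContinuousLinearMap.adjoint R ∈ 𝓡)
    {T : H →L[ℂ] H} (hT : T ∈ wotClosure H (𝓡 : Set (H →L[ℂ] H))) (hT1 : ‖T‖ ≤ 1)
    (x : H) {ε : ℝ} (hε : 0 < ε) :
    ∃ R ∈ 𝓡, ‖R‖ ≤ 1 ∧ ‖R x - T x‖ ≤ ε := by
  haveI : Nontrivial (WithLp 2 (H × H)) := (WithLp.equiv 2 (H × H)).nontrivial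
  set Ttl := Ttil H T with hTtl
  have hsel : IsSelfAdjoint Ttl := isSelfAdjoint_Ttil T
  have hnormT : ‖Ttl‖ ≤ 1 := norm_Ttil_le T hT1
  have hmemT : Ttl ∈ wotClosure (WithLp 2 (H × H)) ((A2 𝓡 : Set _)) :=
    Ttil_mem_wotClosure hsa hT
  set S := cfc gfun Ttl with hSdef
  have hSsa : IsSelfAdjoint S := cfc_predicate gfun Ttl
  have hSmem : S ∈ wotClosure (WithLp 2 (H × H)) ((A2 𝓡 : Set _)) := by
    have h1 : Ttl ∈ wotClosureSubalgebra (A2 𝓡) := hmemT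
    have h2 := cfc_mem_closure (wotClosureSubalgebra (A2 𝓡)) h1 hsel gfun continuous_gfun
    rw [coe_wotClosureSubalgebra] at h2
    rwa [(isClosed_wotClosure _).closure_eq] at h2
  have hfs : cfc ffun S = Ttl := by
    have hcomp : cfc (ffun ∘ gfun) Ttl = cfc ffun (cfc gfun Ttl) :=
      cfc_comp ffun gfun Ttl hsel (continuous_ffun.continuousOn)
        (continuous_gfun.continuousOn)
    have hcongr : cfc (ffun ∘ gfun) Ttl = cfc (id : ℝ → ℝ) Ttl := by
      apply cfc_congr
      intro t ht
      have hb := spectrum_subset_Icc Ttl ht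
      rw [Set.mem_Icc] at hb
      have ht2 : t * t ≤ 1 := by nlinarith [hnormT, norm_nonneg Ttl]
      exact ffun_gfun ht2
    rw [hSdef, ← hcomp, hcongr, cfc_id ℝ Ttl]
  set v := cfc wfun S with hvdef
  set ms := cfc mfun S with hmsdef
  set xt := J2 H x with hxt
  set w₁ := v xt with hw₁
  set w₂ := ms xt with hw₂
  set Vsub : Submodule ℝ (WithLp 2 (H × H) →L[ℂ] WithLp 2 (H × H)) :=
    { carrier := {M | M ∈ A2 𝓡 ∧ IsSelfAdjoint M}
      zero_mem' := ⟨(A2 𝓡).zero_mem, by exact IsSelfAdjoint.zero (WithLp 2 (H × H) →L[ℂ] WithLp 2 (H × H))⟩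
      add_mem' := fun hX hY => ⟨(A2 𝓡).add_mem hX.1 hY.1, by exact IsSelfAdjoint.add (R := WithLp 2 (H × H) →L[ℂ] WithLp 2 (H × H)) hX.2 hY.2⟩
      smul_mem' := by
        intro r M hM
        constructor
        · have h := algebraMap_smul ℂ r M
          rw [← h]
          exact (A2 𝓡).smul_mem hM.1 _
        · have h := algebraMap_smul ℂ r M
          rw [IsSelfAdjoint, ← h, star_smul, hM.2.star_eq]
          congr 1
          simp } with hVsub
  have hVS : S ∈ wotClosure (WithLp 2 (H × H)) (Vsub : Set _) :=
    mem_wotClosure_sa_part (A2 𝓡) (fun M hM => adjoint_mem_A2 hsa hM) hSmem hSsa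
  set δ := ε / 8 with hδdef
  have hδ : 0 < δ := by positivity
  obtain ⟨a, haV, hc1, hc2⟩ := exists_approx_two Vsub hVS w₁ w₂ hδ
  obtain ⟨haA2, hasa⟩ := haV
  set u := cfc wfun a with hudef
  set ma := cfc mfun a with hmadef
  set fa := cfc ffun a with hfadef
  have hu : u * (1 + a * a) = 1 := cfc_w_mul a hasa
  have hv : (1 + S * S) * v = 1 := mul_cfc_w S hSsa
  have hid := ring_identity a S u v hu hv
  have hma' : ma = u * a := cfc_m_eq' a hasa
  have hmaS : ms = S * v := cfc_m_eq S hSsa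
  have hfa : fa = ma + ma := cfc_f_eq a hasa
  have hfS : cfc ffun S = ms + ms := cfc_f_eq S hSsa
  have hdiff : fa - Ttl = (u * a - S * v) + (u * a - S * v) := by
    rw [← hfs, hfa, hfS, hma', hmaS]
    abel
  have hb1 : ‖(u * ((a - S) * v)) xt‖ ≤ δ := by
    have e : (u * ((a - S) * v)) xt = u (a w₁ - S w₁) := by
      simp only [ContinuousLinearMap.mul_apply, ContinuousLinearMap.sub_apply, hw₁]
    rw [e]
    calc ‖u (a w₁ - S w₁)‖ ≤ ‖u‖ * ‖a w₁ - S w₁‖ := u.le_opNorm _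
    _ ≤ 1 * δ := mul_le_mul (norm_cfc_w_le a) hc1 (norm_nonneg _) zero_le_one
    _ = δ := one_mul _
  have hb2 : ‖((u * a) * ((S - a) * (S * v))) xt‖ ≤ δ := by
    have hSv : (S * v) xt = w₂ := by rw [hw₂, hmaS]
    have e : ((u * a) * ((S - a) * (S * v))) xt = (u * a) (S w₂ - a w₂) := by
      have e0 : ((u * a) * ((S - a) * (S * v))) xt = (u * a) ((S - a) ((S * v) xt)) := rfl
      rw [e0, hSv, ContinuousLinearMap.sub_apply]
    rw [e]
    have hn : ‖S w₂ - a w₂‖ ≤ δ := by rw [norm_sub_rev]; exact hc2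
    have hnua : ‖u * a‖ ≤ 1 := by
      rw [← hma']
      exact le_trans (norm_cfc_m_le a) (by norm_num)
    calc ‖(u * a) (S w₂ - a w₂)‖ ≤ ‖u * a‖ * ‖S w₂ - a w₂‖ := (u * a).le_opNorm _
    _ ≤ 1 * δ := mul_le_mul hnua hn (norm_nonneg _) zero_le_one
    _ = δ := one_mul _
  have hdx : ‖fa xt - Ttl xt‖ ≤ 4 * δ := by
    have e : fa xt - Ttl xt = (u * ((a - S) * v) + (u * a) * ((S - a) * (S * v))) xt
        + (u * ((a - S) * v) + (u * a) * ((S - a) * (S * v))) xt := by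
      have e1 : fa xt - Ttl xt = (fa - Ttl) xt := (ContinuousLinearMap.sub_apply _ _ _).symm
      rw [e1, hdiff, hid]
      simp [ContinuousLinearMap.add_apply]
    rw [e]
    calc ‖_ + _‖ ≤ ‖(u * ((a - S) * v) + (u * a) * ((S - a) * (S * v))) xt‖
        + ‖(u * ((a - S) * v) + (u * a) * ((S - a) * (S * v))) xt‖ := norm_add_le _ _
    _ ≤ (δ + δ) + (δ + δ) := by
        have h := norm_add_le ((u * ((a - S) * v)) xt) (((u * a) * ((S - a) * (S * v))) xt)
        have h2 : ‖(u * ((a - S) * v) + (u * a) * ((S - a) * (S * v))) xt‖ ≤ δ + δ := by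
          rw [ContinuousLinearMap.add_apply]
          exact le_trans (norm_add_le _ _) (add_le_add hb1 hb2)
        exact add_le_add h2 h2
    _ = 4 * δ := by ring
  have hfa1 : ‖fa‖ ≤ 1 := by
    rw [hfa]
    calc ‖ma + ma‖ ≤ ‖ma‖ + ‖ma‖ := norm_add_le _ _
    _ ≤ 2⁻¹ + 2⁻¹ := add_le_add (norm_cfc_m_le a) (norm_cfc_m_le a)
    _ = 1 := by norm_num
  set ε₂ := ε / (8 * (‖x‖ + 1)) with hε₂def
  have hε₂ : 0 < ε₂ := by positivity
  have hfacl : fa ∈ closure ((A2 𝓡) : Set _) :=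
    cfc_mem_closure (A2 𝓡) haA2 hasa ffun continuous_ffun
  rw [Metric.mem_closure_iff] at hfacl
  obtain ⟨M, hMA2, hMd⟩ := hfacl ε₂ hε₂
  have hMfa : ‖M - fa‖ ≤ ε₂ := by
    rw [dist_eq_norm] at hMd
    rw [norm_sub_rev]
    exact hMd.le
  have hMnorm : ‖M‖ ≤ 1 + ε₂ := by
    calc ‖M‖ = ‖fa + (M - fa)‖ := by rw [add_sub_cancel]
    _ ≤ ‖fa‖ + ‖M - fa‖ := norm_add_le _ _
    _ ≤ 1 + ε₂ := add_le_add hfa1 hMfa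
  set R0 := P1 H ∘L M ∘L J2 H with hR0
  have hR0mem : R0 ∈ 𝓡 := hMA2.2.1
  have hR0norm : ‖R0‖ ≤ ‖M‖ := by
    refine ContinuousLinearMap.opNorm_le_bound _ (norm_nonneg M) (fun y => ?_)
    calc ‖R0 y‖ = ‖P1 H (M (J2 H y))‖ := rfl
    _ ≤ ‖M (J2 H y)‖ := norm_P1_le _
    _ ≤ ‖M‖ * ‖J2 H y‖ := M.le_opNorm _
    _ = ‖M‖ * ‖y‖ := by rw [norm_J2_apply]
  have hR0x : ‖R0 x - T x‖ ≤ ε₂ * ‖x‖ + 4 * δ := by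
    have e1 : R0 x = P1 H (M xt) := rfl
    have e2 : T x = P1 H (Ttl xt) := by
      rw [hTtl, Ttil_apply_J2, P1_J1_apply]
    rw [e1, e2, ← map_sub]
    calc ‖P1 H (M xt - Ttl xt)‖ ≤ ‖M xt - Ttl xt‖ := norm_P1_le _
    _ = ‖(M xt - fa xt) + (fa xt - Ttl xt)‖ := by abel_nf
    _ ≤ ‖M xt - fa xt‖ + ‖fa xt - Ttl xt‖ := norm_add_le _ _
    _ ≤ ε₂ * ‖x‖ + 4 * δ := by
        apply add_le_add _ hdx
        have e3 : M xt - fa xt = (M - fa) xt := (ContinuousLinearMap.sub_apply _ _ _).symm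
        rw [e3]
        calc ‖(M - fa) xt‖ ≤ ‖M - fa‖ * ‖xt‖ := (M - fa).le_opNorm _
        _ = ‖M - fa‖ * ‖x‖ := by rw [hxt, norm_J2_apply]
        _ ≤ ε₂ * ‖x‖ := mul_le_mul_of_nonneg_right hMfa (norm_nonneg _)
  set c : ℂ := (((1 + ε₂ : ℝ) : ℂ))⁻¹ with hc
  have hcnorm : ‖c‖ = (1 + ε₂)⁻¹ := by
    rw [hc, norm_inv, Complex.norm_real, Real.norm_eq_abs, abs_of_pos (by positivity)]
  refine ⟨c • R0, 𝓡.smul_mem hR0mem c, ?_, ?_⟩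
  · rw [norm_smul, hcnorm]
    have h1 : ‖R0‖ ≤ 1 + ε₂ := le_trans hR0norm hMnorm
    rw [inv_mul_le_iff₀ (by positivity : (0:ℝ) < 1 + ε₂)]
    simpa using h1
  · have hsplit : ‖(c • R0) x - T x‖ ≤ ‖(c • R0) x - R0 x‖ + ‖R0 x - T x‖ := by
      calc ‖(c • R0) x - T x‖ = ‖((c • R0) x - R0 x) + (R0 x - T x)‖ := by abel_nf
      _ ≤ _ := norm_add_le _ _
    have hfirst : ‖(c • R0) x - R0 x‖ ≤ ε₂ * ‖x‖ := by
      have e : (c • R0) x - R0 x = (c - 1) • (R0 x) := by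
        rw [sub_smul, one_smul]
        rfl
      rw [e, norm_smul]
      have hnc : ‖c - 1‖ = ε₂ / (1 + ε₂) := by
        have e2 : c - 1 = (((1 + ε₂)⁻¹ - 1 : ℝ) : ℂ) := by
          rw [hc]; push_cast; ring
        rw [e2, Complex.norm_real, Real.norm_eq_abs, abs_of_nonpos, neg_sub]
        · field_simp
          ring
        · have h3 : (1 + ε₂)⁻¹ ≤ 1 := by
            rw [inv_le_one_iff₀]; right; linarith
          linarith
      have hR0xn : ‖R0 x‖ ≤ (1 + ε₂) * ‖x‖ := by
        calc ‖R0 x‖ ≤ ‖R0‖ * ‖x‖ := R0.le_opNorm _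
        _ ≤ (1 + ε₂) * ‖x‖ :=
            mul_le_mul_of_nonneg_right (le_trans hR0norm hMnorm) (norm_nonneg _)
      calc ‖c - 1‖ * ‖R0 x‖ ≤ (ε₂ / (1 + ε₂)) * ((1 + ε₂) * ‖x‖) := by
            rw [hnc]
            exact mul_le_mul_of_nonneg_left hR0xn (by positivity)
      _ = ε₂ * ‖x‖ := by field_simp
    have hxb : ε₂ * ‖x‖ ≤ ε / 8 := by
      rw [hε₂def]
      rw [div_mul_eq_mul_div, div_le_div_iff₀ (by positivity) (by norm_num)]
      nlinarith [norm_nonneg x]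
    have htot := le_trans hsplit (add_le_add hfirst hR0x)
    rw [hδdef] at htot
    linarith

end Key

end LocalizingAux

/-- If `𝓡` is a selfadjoint algebra of operators on a Hilbert space whose closure in the
weak operator topology is localizing, then `𝓡` itself is localizing. -/
theorem localizing_of_wotClosure_localizing_selfadjoint
    {H : Type*} [NormedAddCommGroup H] [InnerProductSpace ℂ H] [CompleteSpace H]
    (𝓡 : Subalgebra ℂ (H →L[ℂ] H))
    (hsa : ∀ R ∈ 𝓡, ContinuousLinearMap.adjoint R ∈ 𝓡)
    (hloc : IsLocalizing (wotClosure H (𝓡 : Set (H →L[ℂ] H)))) :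
    IsLocalizing (𝓡 : Set (H →L[ℂ] H)) := by
  obtain ⟨c, r, hr, h0, hseq⟩ := hloc
  rcases subsingleton_or_nontrivial H with hsub | hnt
  · exfalso
    apply h0
    have hc : (0 : H) = c := Subsingleton.elim _ _
    rw [Metric.mem_closedBall, hc, dist_self]
    exact hr.le
  · refine ⟨c, r, hr, h0, fun x hx => ?_⟩
    obtain ⟨n, X, y, hmono, hXmem, hXnorm, hy, hconv⟩ := hseq x hx
    have hkey : ∀ j : ℕ, ∃ R ∈ 𝓡, ‖R‖ ≤ 1 ∧ ‖R (x (n j)) - X j (x (n j))‖ ≤ ((j : ℝ) + 1)⁻¹ :=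
      fun j => LocalizingAux.key 𝓡 hsa (hXmem j) (hXnorm j) (x (n j))
        (by positivity : (0:ℝ) < ((j : ℝ) + 1)⁻¹)
    choose R hRmem hRnorm hRclose using hkey
    refine ⟨n, R, y, hmono, hRmem, hRnorm, hy, ?_⟩
    rw [tendsto_iff_norm_sub_tendsto_zero]
    apply squeeze_zero (fun j => norm_nonneg _)
      (g := fun j : ℕ => ((j : ℝ) + 1)⁻¹ + ‖X j (x (n j)) - y‖)
    · intro j
      calc ‖R j (x (n j)) - y‖
          = ‖(R j (x (n j)) - X j (x (n j))) + (X j (x (n j)) - y)‖ := by abel_nf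
      _ ≤ ‖R j (x (n j)) - X j (x (n j))‖ + ‖X j (x (n j)) - y‖ := norm_add_le _ _
      _ ≤ ((j : ℝ) + 1)⁻¹ + ‖X j (x (n j)) - y‖ := by
          exact add_le_add (hRclose j) le_rfl
    · have h1 : Tendsto (fun j : ℕ => ((j : ℝ) + 1)⁻¹) atTop (𝓝 0) := by
        have := tendsto_one_div_add_atTop_nhds_zero_nat (𝕜 := ℝ)
        simpa [one_div] using this
      have h2 : Tendsto (fun j => ‖X j (x (n j)) - y‖) atTop (𝓝 0) :=
        tendsto_iff_norm_sub_tendsto_zero.mp hconv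
      simpa using h1.add h2
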